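/- Let λ₂ ≥ 0, let w ∈ ℝ^p have nonnegative entries, and fix β̄ ∈ ℝ^p. Then β̄ is a global minimizer of G_w if and only if there exists μ ≥ 0 such that β̄ is a global minimizer of the function β ↦ G_w(β) + (μ/2)‖Xβ − Xβ̄‖₂². -/

import Mathlib

/-- Index for the ℓ_r norm with r ∈ {1, 2, ∞}. -/
inductive LrIndex : Type
  | one | two | inf

/-- The ℓ_r norm on ℝ^n for r ∈ {1, 2, ∞}. -/
noncomputable def lrNorm {n : ℕ} (r : LrIndex) (z : Fin n → ℝ) : ℝ :=
  match r with
  | .one => ∑ j, |z j|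
  | .two => Real.sqrt (∑ j, (z j) ^ 2)
  | .inf => ⨆ j, |z j|

/-- `v` is a subgradient of `z ↦ ‖z − y‖_r` at `z₀`. -/
def IsSubgradAt {n : ℕ} (r : LrIndex) (y v z₀ : Fin n → ℝ) : Prop :=
  ∀ z : Fin n → ℝ,
    lrNorm r (z₀ - y) + ∑ j, v j * (z j - z₀ j) ≤ lrNorm r (z - y)

/-- Weighted objective G_w(β) = ‖Xβ − y‖_r + λ₂‖β‖₂² + qλ₁ Σᵢ wᵢ|βᵢ|. -/
noncomputable def objG {n p : ℕ} (r : LrIndex) (X : Matrix (Fin n) (Fin p) ℝ)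
    (y : Fin n → ℝ) (lam1 lam2 q : ℝ) (w : Fin p → ℝ) (β : Fin p → ℝ) : ℝ :=
  lrNorm r (X.mulVec β - y) + lam2 * ∑ i, (β i) ^ 2 + q * lam1 * ∑ i, w i * |β i|

lemma lrNorm_two_eq {n : ℕ} (z : Fin n → ℝ) :
    lrNorm LrIndex.two z = ‖(WithLp.equiv 2 (Fin n → ℝ)).symm z‖ := by
  rw [lrNorm, EuclideanSpace.norm_eq]
  congr 1
  exact Finset.sum_congr rfl fun j _ => by simp [sq_abs]

/-- Convex-combination inequality for the three norms. -/
lemma lrNorm_combo {n : ℕ} (r : LrIndex) (u v : Fin n → ℝ) (t : ℝ)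
    (h0 : 0 ≤ t) (h1 : t ≤ 1) :
    lrNorm r (fun j => (1 - t) * u j + t * v j)
      ≤ (1 - t) * lrNorm r u + t * lrNorm r v := by
  have h1t : 0 ≤ 1 - t := by linarith
  cases r with
  | one =>
    simp only [lrNorm, Finset.mul_sum]
    rw [← Finset.sum_add_distrib]
    apply Finset.sum_le_sum
    intro j _
    calc |(1 - t) * u j + t * v j| ≤ |(1 - t) * u j| + |t * v j| := abs_add_le _ _
      _ = (1 - t) * |u j| + t * |v j| := by
          rw [abs_mul, abs_mul, abs_of_nonneg h1t, abs_of_nonneg h0]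
  | two =>
    have key : (WithLp.equiv 2 (Fin n → ℝ)).symm (fun j => (1 - t) * u j + t * v j)
        = (1 - t) • (WithLp.equiv 2 (Fin n → ℝ)).symm u
          + t • (WithLp.equiv 2 (Fin n → ℝ)).symm v := rfl
    rw [lrNorm_two_eq, lrNorm_two_eq, lrNorm_two_eq, key]
    calc ‖(1 - t) • (WithLp.equiv 2 (Fin n → ℝ)).symm u
          + t • (WithLp.equiv 2 (Fin n → ℝ)).symm v‖
        ≤ ‖(1 - t) • (WithLp.equiv 2 (Fin n → ℝ)).symm u‖
          + ‖t • (WithLp.equiv 2 (Fin n → ℝ)).symm v‖ := norm_add_le _ _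
      _ = (1 - t) * ‖(WithLp.equiv 2 (Fin n → ℝ)).symm u‖
          + t * ‖(WithLp.equiv 2 (Fin n → ℝ)).symm v‖ := by
          rw [norm_smul, norm_smul, Real.norm_eq_abs, Real.norm_eq_abs,
            abs_of_nonneg h1t, abs_of_nonneg h0]
  | inf =>
    simp only [lrNorm]
    rcases Nat.eq_zero_or_pos n with hn | hn
    · subst hn
      simp [iSup_of_empty, Real.sSup_empty]
    · haveI : Nonempty (Fin n) := ⟨⟨0, hn⟩⟩
      apply ciSup_le
      intro j
      have bu : |u j| ≤ ⨆ k, |u k| :=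
        le_ciSup (f := fun k => |u k|) (Set.Finite.bddAbove (Set.finite_range _)) j
      have bv : |v j| ≤ ⨆ k, |v k| :=
        le_ciSup (f := fun k => |v k|) (Set.Finite.bddAbove (Set.finite_range _)) j
      calc |(1 - t) * u j + t * v j| ≤ |(1 - t) * u j| + |t * v j| := abs_add_le _ _
        _ = (1 - t) * |u j| + t * |v j| := by
            rw [abs_mul, abs_mul, abs_of_nonneg h1t, abs_of_nonneg h0]
        _ ≤ (1 - t) * (⨆ k, |u k|) + t * (⨆ k, |v k|) := by
            gcongr <;> first | exact bu | exact bv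

lemma mulVec_combo {n p : ℕ} (X : Matrix (Fin n) (Fin p) ℝ) (a b : Fin p → ℝ) (t : ℝ) :
    X.mulVec (fun i => (1 - t) * a i + t * b i)
      = fun j => (1 - t) * X.mulVec a j + t * X.mulVec b j := by
  funext j
  simp only [Matrix.mulVec, dotProduct, Finset.mul_sum, mul_add,
    ← Finset.sum_add_distrib]
  exact Finset.sum_congr rfl fun i _ => by ring

/-- Convexity of objG along segments. -/
lemma objG_combo {n p : ℕ} (r : LrIndex) (X : Matrix (Fin n) (Fin p) ℝ)
    (y : Fin n → ℝ) (lam1 lam2 q : ℝ) (hlam1 : 0 ≤ lam1) (hlam2 : 0 ≤ lam2)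
    (hq : 0 ≤ q) (w : Fin p → ℝ) (hw : ∀ i, 0 ≤ w i) (a b : Fin p → ℝ)
    (t : ℝ) (h0 : 0 ≤ t) (h1 : t ≤ 1) :
    objG r X y lam1 lam2 q w (fun i => (1 - t) * a i + t * b i)
      ≤ (1 - t) * objG r X y lam1 lam2 q w a + t * objG r X y lam1 lam2 q w b := by
  have h1t : 0 ≤ 1 - t := by linarith
  have hnorm : lrNorm r (X.mulVec (fun i => (1 - t) * a i + t * b i) - y)
      ≤ (1 - t) * lrNorm r (X.mulVec a - y) + t * lrNorm r (X.mulVec b - y) := by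
    have : X.mulVec (fun i => (1 - t) * a i + t * b i) - y
        = fun j => (1 - t) * (X.mulVec a - y) j + t * (X.mulVec b - y) j := by
      funext j
      rw [mulVec_combo]
      simp only [Pi.sub_apply]
      ring
    rw [this]
    exact lrNorm_combo r _ _ t h0 h1
  have hsq : ∑ i, ((1 - t) * a i + t * b i) ^ 2
      ≤ (1 - t) * ∑ i, (a i) ^ 2 + t * ∑ i, (b i) ^ 2 := by
    simp only [Finset.mul_sum]
    rw [← Finset.sum_add_distrib]
    apply Finset.sum_le_sum
    intro i _
    nlinarith [sq_nonneg (a i - b i), mul_nonneg h0 h1t]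
  have habs : ∑ i, w i * |(1 - t) * a i + t * b i|
      ≤ (1 - t) * ∑ i, w i * |a i| + t * ∑ i, w i * |b i| := by
    simp only [Finset.mul_sum]
    rw [← Finset.sum_add_distrib]
    apply Finset.sum_le_sum
    intro i _
    have : |(1 - t) * a i + t * b i| ≤ (1 - t) * |a i| + t * |b i| := by
      calc |(1 - t) * a i + t * b i| ≤ |(1 - t) * a i| + |t * b i| := abs_add_le _ _
        _ = (1 - t) * |a i| + t * |b i| := by
            rw [abs_mul, abs_mul, abs_of_nonneg h1t, abs_of_nonneg h0]
    calc w i * |(1 - t) * a i + t * b i| ≤ w i * ((1 - t) * |a i| + t * |b i|) :=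
          mul_le_mul_of_nonneg_left this (hw i)
      _ = (1 - t) * (w i * |a i|) + t * (w i * |b i|) := by ring
  have hl2 : lam2 * ∑ i, ((1 - t) * a i + t * b i) ^ 2
      ≤ lam2 * ((1 - t) * ∑ i, (a i) ^ 2 + t * ∑ i, (b i) ^ 2) :=
    mul_le_mul_of_nonneg_left hsq hlam2
  have hql : q * lam1 * ∑ i, w i * |(1 - t) * a i + t * b i|
      ≤ q * lam1 * ((1 - t) * ∑ i, w i * |a i| + t * ∑ i, w i * |b i|) :=
    mul_le_mul_of_nonneg_left habs (mul_nonneg hq hlam1)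
  simp only [objG]
  nlinarith [hnorm, hl2, hql]

/-- β̄ is a global minimizer of G_w iff for some μ ≥ 0 it is a global
minimizer of β ↦ G_w(β) + (μ/2)‖Xβ − Xβ̄‖₂². -/
theorem prox_min_iff_min {n p : ℕ} (hn : 0 < n) (hp : 0 < p)
    (r : LrIndex) (X : Matrix (Fin n) (Fin p) ℝ) (y : Fin n → ℝ)
    (lam1 lam2 q : ℝ) (hlam1 : 0 < lam1) (hlam2 : 0 ≤ lam2)
    (hq0 : 0 < q) (hq1 : q < 1)
    (w : Fin p → ℝ) (hw : ∀ i, 0 ≤ w i) (βbar : Fin p → ℝ) :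
    (∀ β : Fin p → ℝ, objG r X y lam1 lam2 q w βbar ≤ objG r X y lam1 lam2 q w β) ↔
    ∃ μ : ℝ, 0 ≤ μ ∧ ∀ β : Fin p → ℝ,
      objG r X y lam1 lam2 q w βbar
          + μ / 2 * ∑ j, ((X.mulVec βbar - X.mulVec βbar) j) ^ 2
        ≤ objG r X y lam1 lam2 q w β
          + μ / 2 * ∑ j, ((X.mulVec β - X.mulVec βbar) j) ^ 2 := by
  constructor
  · intro h
    refine ⟨0, le_refl 0, fun β => ?_⟩
    simpa using h β
  · rintro ⟨μ, hμ, h⟩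
    intro β
    set G := objG r X y lam1 lam2 q w with hG
    set c : ℝ := ∑ j, ((X.mulVec β - X.mulVec βbar) j) ^ 2 with hc
    have hc0 : 0 ≤ c := Finset.sum_nonneg fun j _ => sq_nonneg _
    -- key estimate: for t ∈ (0,1], G βbar ≤ G β + (μ*c/2)*t
    have key : ∀ t : ℝ, 0 < t → t ≤ 1 → G βbar ≤ G β + (μ * c / 2) * t := by
      intro t ht0 ht1
      set βt : Fin p → ℝ := fun i => (1 - t) * βbar i + t * β i with hβt
      have hXt : X.mulVec βt - X.mulVec βbar
          = fun j => t * ((X.mulVec β - X.mulVec βbar) j) := by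
        funext j
        rw [hβt, mulVec_combo]
        simp only [Pi.sub_apply]
        ring
      have hsum : ∑ j, ((X.mulVec βt - X.mulVec βbar) j) ^ 2 = t ^ 2 * c := by
        rw [hXt, hc, Finset.mul_sum]
        exact Finset.sum_congr rfl fun j _ => by ring
      have h0 : ∑ j, ((X.mulVec βbar - X.mulVec βbar) j) ^ 2 = 0 := by
        simp
      have hmin := h βt
      rw [hsum, h0] at hmin
      have hconv := objG_combo r X y lam1 lam2 q (le_of_lt hlam1) hlam2
        (le_of_lt hq0) w hw βbar β t (le_of_lt ht0) ht1
      rw [← hG] at hconv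
      -- G βbar + 0 ≤ G βt + μ/2 * (t²c) ≤ (1-t) G βbar + t G β + μ/2 t² c
      have : t * G βbar ≤ t * G β + μ / 2 * (t ^ 2 * c) := by nlinarith
      have := (mul_le_mul_iff_right₀ ht0).mp (by nlinarith : t * G βbar ≤ t * (G β + μ * c / 2 * t))
      linarith
    -- limit t → 0⁺
    apply le_of_forall_pos_le_add
    intro ε hε
    set K : ℝ := μ * c / 2 + 1 with hK
    have hK0 : 0 < K := by rw [hK]; nlinarith [mul_nonneg hμ hc0]
    set t : ℝ := min 1 (ε / K) with ht
    have ht0 : 0 < t := lt_min one_pos (div_pos hε hK0)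
    have ht1 : t ≤ 1 := min_le_left _ _
    have htail : μ * c / 2 * t ≤ ε := by
      have h1 : μ * c / 2 * t ≤ K * t := by
        have hle : μ * c / 2 ≤ K := by rw [hK]; linarith
        exact mul_le_mul_of_nonneg_right hle (le_of_lt ht0)
      have h2 : K * t ≤ K * (ε / K) :=
        mul_le_mul_of_nonneg_left (min_le_right _ _) (le_of_lt hK0)
      have h3 : K * (ε / K) = ε := mul_div_cancel₀ ε (ne_of_gt hK0)
      linarith
    have := key t ht0 ht1
    linarith
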